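/- For every integer n ≥ 2 and every real data vector (f_r)_{r=-n+1}^{n}, the function R(β₀,β₁,β₂,β₃) = ∑_{r=-n+1}^{n} (f_r − β₀ − β₁ r − β₂ r² − β₃ r³)² attains its unique global minimum over ℝ⁴ at the point defined by β₃ = ∑_{r=-n+1}^{n} [35(10r³ − 15r² + 11r − 6n²r + 3n² − 3)/(n(n²−1)(4n²−1)(4n²−9))] f_r, β₂ = ∑_{r=-n+1}^{n} [15(3r² − 3r − n² + 1)/(2n(n²−1)(4n²−1))] f_r − (3/2)β₃, β₁ = ∑_{r=-n+1}^{n} [3(2r−1)/(n(4n²−1))] f_r − β₂ − (1/5)(3n²+2)β₃, and β₀ = (1/(2n)) ∑_{r=-n+1}^{n} f_r − (1/2)β₁ − (1/6)(2n²+1)β₂ − (n²/2)β₃. (Proposition 2.1) -/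

import Mathlib

set_option maxHeartbeats 10000000

private lemma icc_sum_formula (g : ℤ → ℝ) (G : ℤ → ℝ)
    (hbase : g (-1) + g 0 + g 1 + g 2 = G 2)
    (hstep : ∀ m : ℤ, 2 ≤ m → G m + g (-m) + g (m + 1) = G (m + 1)) :
    ∀ n : ℤ, 2 ≤ n → ∑ r ∈ Finset.Icc (-n + 1) n, g r = G n := by
  refine Int.le_induction ?_ ?_
  ·
    have hset : Finset.Icc (-2 + 1 : ℤ) 2 = {-1, 0, 1, 2} := by
      ext x; simp [Finset.mem_Icc]; omega
    rw [hset]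
    rw [show ({-1, 0, 1, 2} : Finset ℤ)
        = insert (-1) (insert 0 (insert 1 ({2} : Finset ℤ))) from rfl,
      Finset.sum_insert (by decide), Finset.sum_insert (by decide),
      Finset.sum_insert (by decide), Finset.sum_singleton]
    linarith [hbase]
  · intro m hm ih
    have hset : Finset.Icc (-(m + 1) + 1) (m + 1)
        = insert (-m) (insert (m + 1) (Finset.Icc (-m + 1) m)) := by
      ext x; simp only [Finset.mem_Icc, Finset.mem_insert]; omega
    rw [hset, Finset.sum_insert (by simp only [Finset.mem_insert, Finset.mem_Icc]; omega),
      Finset.sum_insert (by simp only [Finset.mem_Icc]; omega), ih]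
    linarith [hstep m hm]

/-- Proposition 2.1: ordinary least squares fitting of a cubic polynomial to the
2n observations `(r, f r)`, `r = -n+1, …, n`, attains its unique global minimum
at the point `(β₀, β₁, β₂, β₃)` given by the stated explicit formulas. -/
theorem stmt_0 (n : ℤ) (hn : 2 ≤ n) (f : ℤ → ℝ)
    (β0 β1 β2 β3 : ℝ)
    (hβ3 : β3 = ∑ r ∈ Finset.Icc (-n + 1) n,
      35 * (10 * (r : ℝ) ^ 3 - 15 * (r : ℝ) ^ 2 + 11 * (r : ℝ) - 6 * (n : ℝ) ^ 2 * (r : ℝ)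
          + 3 * (n : ℝ) ^ 2 - 3) /
        ((n : ℝ) * ((n : ℝ) ^ 2 - 1) * (4 * (n : ℝ) ^ 2 - 1) * (4 * (n : ℝ) ^ 2 - 9)) * f r)
    (hβ2 : β2 = (∑ r ∈ Finset.Icc (-n + 1) n,
      15 * (3 * (r : ℝ) ^ 2 - 3 * (r : ℝ) - (n : ℝ) ^ 2 + 1) /
        (2 * (n : ℝ) * ((n : ℝ) ^ 2 - 1) * (4 * (n : ℝ) ^ 2 - 1)) * f r) - 3 / 2 * β3)
    (hβ1 : β1 = (∑ r ∈ Finset.Icc (-n + 1) n,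
      3 * (2 * (r : ℝ) - 1) / ((n : ℝ) * (4 * (n : ℝ) ^ 2 - 1)) * f r)
      - β2 - 1 / 5 * (3 * (n : ℝ) ^ 2 + 2) * β3)
    (hβ0 : β0 = (1 / (2 * (n : ℝ))) * (∑ r ∈ Finset.Icc (-n + 1) n, f r)
      - 1 / 2 * β1 - 1 / 6 * (2 * (n : ℝ) ^ 2 + 1) * β2 - (n : ℝ) ^ 2 / 2 * β3) :
    ∀ b0 b1 b2 b3 : ℝ, (b0, b1, b2, b3) ≠ (β0, β1, β2, β3) →
      (∑ r ∈ Finset.Icc (-n + 1) n,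
        (f r - β0 - β1 * (r : ℝ) - β2 * (r : ℝ) ^ 2 - β3 * (r : ℝ) ^ 3) ^ 2) <
      (∑ r ∈ Finset.Icc (-n + 1) n,
        (f r - b0 - b1 * (r : ℝ) - b2 * (r : ℝ) ^ 2 - b3 * (r : ℝ) ^ 3) ^ 2) := by
  have hn' : (2 : ℝ) ≤ (n : ℝ) := by exact_mod_cast hn
  have hN0 : (n : ℝ) ≠ 0 := by positivity
  have hN1 : (n : ℝ) ^ 2 - 1 ≠ 0 := by nlinarith
  have hN4 : 4 * (n : ℝ) ^ 2 - 1 ≠ 0 := by nlinarith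
  have hN9 : 4 * (n : ℝ) ^ 2 - 9 ≠ 0 := by nlinarith
  -- power sums
  have p0 : ∑ r ∈ Finset.Icc (-n + 1) n, ((r : ℝ)) ^ 0 = 2 * (n : ℝ) :=
    icc_sum_formula _ (fun m => 2 * (m : ℝ)) (by norm_num)
      (fun m hm => by push_cast; ring) n hn
  have p1 : ∑ r ∈ Finset.Icc (-n + 1) n, ((r : ℝ)) ^ 1 = (n : ℝ) :=
    icc_sum_formula _ (fun m => (m : ℝ)) (by norm_num)
      (fun m hm => by push_cast; ring) n hn
  have p2 : ∑ r ∈ Finset.Icc (-n + 1) n, ((r : ℝ)) ^ 2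
      = ((n : ℝ) + 2 * (n : ℝ) ^ 3) / 3 :=
    icc_sum_formula _ (fun m => ((m : ℝ) + 2 * (m : ℝ) ^ 3) / 3) (by norm_num)
      (fun m hm => by push_cast; ring) n hn
  have p3 : ∑ r ∈ Finset.Icc (-n + 1) n, ((r : ℝ)) ^ 3 = (n : ℝ) ^ 3 :=
    icc_sum_formula _ (fun m => (m : ℝ) ^ 3) (by norm_num)
      (fun m hm => by push_cast; ring) n hn
  have p4 : ∑ r ∈ Finset.Icc (-n + 1) n, ((r : ℝ)) ^ 4
      = (-(n : ℝ) + 10 * (n : ℝ) ^ 3 + 6 * (n : ℝ) ^ 5) / 15 :=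
    icc_sum_formula _ (fun m => (-(m : ℝ) + 10 * (m : ℝ) ^ 3 + 6 * (m : ℝ) ^ 5) / 15)
      (by norm_num) (fun m hm => by push_cast; ring) n hn
  have p5 : ∑ r ∈ Finset.Icc (-n + 1) n, ((r : ℝ)) ^ 5 = (n : ℝ) ^ 5 :=
    icc_sum_formula _ (fun m => (m : ℝ) ^ 5) (by norm_num)
      (fun m hm => by push_cast; ring) n hn
  have p6 : ∑ r ∈ Finset.Icc (-n + 1) n, ((r : ℝ)) ^ 6
      = ((n : ℝ) - 7 * (n : ℝ) ^ 3 + 21 * (n : ℝ) ^ 5 + 6 * (n : ℝ) ^ 7) / 21 :=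
    icc_sum_formula _
      (fun m => ((m : ℝ) - 7 * (m : ℝ) ^ 3 + 21 * (m : ℝ) ^ 5 + 6 * (m : ℝ) ^ 7) / 21)
      (by norm_num) (fun m hm => by push_cast; ring) n hn
  -- β's in terms of moment sums
  have hb3 : β3 =
      (350 * (∑ r ∈ Finset.Icc (-n + 1) n, (r : ℝ) ^ 3 * f r)
        - 525 * (∑ r ∈ Finset.Icc (-n + 1) n, (r : ℝ) ^ 2 * f r)
        + (385 - 210 * (n : ℝ) ^ 2) * (∑ r ∈ Finset.Icc (-n + 1) n, (r : ℝ) * f r)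
        + (105 * (n : ℝ) ^ 2 - 105) * (∑ r ∈ Finset.Icc (-n + 1) n, f r)) /
      ((n : ℝ) * ((n : ℝ) ^ 2 - 1) * (4 * (n : ℝ) ^ 2 - 1) * (4 * (n : ℝ) ^ 2 - 9)) := by
    have hsplit : (∑ r ∈ Finset.Icc (-n + 1) n,
      35 * (10 * (r : ℝ) ^ 3 - 15 * (r : ℝ) ^ 2 + 11 * (r : ℝ) - 6 * (n : ℝ) ^ 2 * (r : ℝ)
          + 3 * (n : ℝ) ^ 2 - 3) /
        ((n : ℝ) * ((n : ℝ) ^ 2 - 1) * (4 * (n : ℝ) ^ 2 - 1) * (4 * (n : ℝ) ^ 2 - 9)) * f r)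
      = ∑ r ∈ Finset.Icc (-n + 1) n,
        ((350 / ((n : ℝ) * ((n : ℝ) ^ 2 - 1) * (4 * (n : ℝ) ^ 2 - 1) * (4 * (n : ℝ) ^ 2 - 9)))
            * ((r : ℝ) ^ 3 * f r)
        + ((-525 / ((n : ℝ) * ((n : ℝ) ^ 2 - 1) * (4 * (n : ℝ) ^ 2 - 1) * (4 * (n : ℝ) ^ 2 - 9)))
            * ((r : ℝ) ^ 2 * f r)
        + (((385 - 210 * (n : ℝ) ^ 2)
              / ((n : ℝ) * ((n : ℝ) ^ 2 - 1) * (4 * (n : ℝ) ^ 2 - 1) * (4 * (n : ℝ) ^ 2 - 9)))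
            * ((r : ℝ) * f r)
        + (((105 * (n : ℝ) ^ 2 - 105)
              / ((n : ℝ) * ((n : ℝ) ^ 2 - 1) * (4 * (n : ℝ) ^ 2 - 1) * (4 * (n : ℝ) ^ 2 - 9)))
            * f r)))) := Finset.sum_congr rfl fun r _ => by ring
    rw [hβ3, hsplit]
    simp only [Finset.sum_add_distrib, ← Finset.mul_sum]
    ring
  have hb2 : β2 =
      (45 * (∑ r ∈ Finset.Icc (-n + 1) n, (r : ℝ) ^ 2 * f r)
        - 45 * (∑ r ∈ Finset.Icc (-n + 1) n, (r : ℝ) * f r)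
        + (15 - 15 * (n : ℝ) ^ 2) * (∑ r ∈ Finset.Icc (-n + 1) n, f r)) /
      (2 * (n : ℝ) * ((n : ℝ) ^ 2 - 1) * (4 * (n : ℝ) ^ 2 - 1)) - 3 / 2 * β3 := by
    have hsplit : (∑ r ∈ Finset.Icc (-n + 1) n,
      15 * (3 * (r : ℝ) ^ 2 - 3 * (r : ℝ) - (n : ℝ) ^ 2 + 1) /
        (2 * (n : ℝ) * ((n : ℝ) ^ 2 - 1) * (4 * (n : ℝ) ^ 2 - 1)) * f r)
      = ∑ r ∈ Finset.Icc (-n + 1) n,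
        ((45 / (2 * (n : ℝ) * ((n : ℝ) ^ 2 - 1) * (4 * (n : ℝ) ^ 2 - 1))) * ((r : ℝ) ^ 2 * f r)
        + ((-45 / (2 * (n : ℝ) * ((n : ℝ) ^ 2 - 1) * (4 * (n : ℝ) ^ 2 - 1))) * ((r : ℝ) * f r)
        + (((15 - 15 * (n : ℝ) ^ 2) / (2 * (n : ℝ) * ((n : ℝ) ^ 2 - 1) * (4 * (n : ℝ) ^ 2 - 1)))
            * f r))) := Finset.sum_congr rfl fun r _ => by ring
    rw [hβ2, hsplit]
    simp only [Finset.sum_add_distrib, ← Finset.mul_sum]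
    ring
  have hb1 : β1 =
      (6 * (∑ r ∈ Finset.Icc (-n + 1) n, (r : ℝ) * f r)
        - 3 * (∑ r ∈ Finset.Icc (-n + 1) n, f r)) / ((n : ℝ) * (4 * (n : ℝ) ^ 2 - 1))
      - β2 - 1 / 5 * (3 * (n : ℝ) ^ 2 + 2) * β3 := by
    have hsplit : (∑ r ∈ Finset.Icc (-n + 1) n,
      3 * (2 * (r : ℝ) - 1) / ((n : ℝ) * (4 * (n : ℝ) ^ 2 - 1)) * f r)
      = ∑ r ∈ Finset.Icc (-n + 1) n,
        ((6 / ((n : ℝ) * (4 * (n : ℝ) ^ 2 - 1))) * ((r : ℝ) * f r)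
        + ((-3 / ((n : ℝ) * (4 * (n : ℝ) ^ 2 - 1))) * f r))
      := Finset.sum_congr rfl fun r _ => by ring
    rw [hβ1, hsplit]
    simp only [Finset.sum_add_distrib, ← Finset.mul_sum]
    ring
  -- normal equations
  have E0 : ∑ r ∈ Finset.Icc (-n + 1) n,
      ((f r - β0 - β1 * (r : ℝ) - β2 * (r : ℝ) ^ 2 - β3 * (r : ℝ) ^ 3) * (r : ℝ) ^ 0) = 0 := by
    have hsplit : (∑ r ∈ Finset.Icc (-n + 1) n,
        ((f r - β0 - β1 * (r : ℝ) - β2 * (r : ℝ) ^ 2 - β3 * (r : ℝ) ^ 3) * (r : ℝ) ^ 0))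
      = ∑ r ∈ Finset.Icc (-n + 1) n,
        (f r + ((-β0) * ((r : ℝ)) ^ 0 + ((-β1) * ((r : ℝ)) ^ 1
          + ((-β2) * ((r : ℝ)) ^ 2 + (-β3) * ((r : ℝ)) ^ 3))))
      := Finset.sum_congr rfl fun r _ => by ring
    rw [hsplit]
    simp only [Finset.sum_add_distrib, ← Finset.mul_sum]
    rw [p0, p1, p2, p3, hβ0, hb1, hb2, hb3]
    generalize hA : 4 * (n : ℝ) ^ 2 - 9 = A at hN9 ⊢
    generalize hC : 4 * (n : ℝ) ^ 2 - 1 = C at hN4 ⊢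
    generalize hB : (n : ℝ) ^ 2 - 1 = B at hN1 ⊢
    field_simp
    subst hA hB hC
    ring
  have E1 : ∑ r ∈ Finset.Icc (-n + 1) n,
      ((f r - β0 - β1 * (r : ℝ) - β2 * (r : ℝ) ^ 2 - β3 * (r : ℝ) ^ 3) * (r : ℝ) ^ 1) = 0 := by
    have hsplit : (∑ r ∈ Finset.Icc (-n + 1) n,
        ((f r - β0 - β1 * (r : ℝ) - β2 * (r : ℝ) ^ 2 - β3 * (r : ℝ) ^ 3) * (r : ℝ) ^ 1))
      = ∑ r ∈ Finset.Icc (-n + 1) n,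
        ((r : ℝ) * f r + ((-β0) * ((r : ℝ)) ^ 1 + ((-β1) * ((r : ℝ)) ^ 2
          + ((-β2) * ((r : ℝ)) ^ 3 + (-β3) * ((r : ℝ)) ^ 4))))
      := Finset.sum_congr rfl fun r _ => by ring
    rw [hsplit]
    simp only [Finset.sum_add_distrib, ← Finset.mul_sum]
    rw [p1, p2, p3, p4, hβ0, hb1, hb2, hb3]
    generalize hA : 4 * (n : ℝ) ^ 2 - 9 = A at hN9 ⊢
    generalize hC : 4 * (n : ℝ) ^ 2 - 1 = C at hN4 ⊢
    generalize hB : (n : ℝ) ^ 2 - 1 = B at hN1 ⊢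
    field_simp
    subst hA hB hC
    ring
  have E2 : ∑ r ∈ Finset.Icc (-n + 1) n,
      ((f r - β0 - β1 * (r : ℝ) - β2 * (r : ℝ) ^ 2 - β3 * (r : ℝ) ^ 3) * (r : ℝ) ^ 2) = 0 := by
    have hsplit : (∑ r ∈ Finset.Icc (-n + 1) n,
        ((f r - β0 - β1 * (r : ℝ) - β2 * (r : ℝ) ^ 2 - β3 * (r : ℝ) ^ 3) * (r : ℝ) ^ 2))
      = ∑ r ∈ Finset.Icc (-n + 1) n,
        ((r : ℝ) ^ 2 * f r + ((-β0) * ((r : ℝ)) ^ 2 + ((-β1) * ((r : ℝ)) ^ 3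
          + ((-β2) * ((r : ℝ)) ^ 4 + (-β3) * ((r : ℝ)) ^ 5))))
      := Finset.sum_congr rfl fun r _ => by ring
    rw [hsplit]
    simp only [Finset.sum_add_distrib, ← Finset.mul_sum]
    rw [p2, p3, p4, p5, hβ0, hb1, hb2, hb3]
    generalize hA : 4 * (n : ℝ) ^ 2 - 9 = A at hN9 ⊢
    generalize hC : 4 * (n : ℝ) ^ 2 - 1 = C at hN4 ⊢
    generalize hB : (n : ℝ) ^ 2 - 1 = B at hN1 ⊢
    field_simp
    subst hA hB hC
    ring
  have E3 : ∑ r ∈ Finset.Icc (-n + 1) n,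
      ((f r - β0 - β1 * (r : ℝ) - β2 * (r : ℝ) ^ 2 - β3 * (r : ℝ) ^ 3) * (r : ℝ) ^ 3) = 0 := by
    have hsplit : (∑ r ∈ Finset.Icc (-n + 1) n,
        ((f r - β0 - β1 * (r : ℝ) - β2 * (r : ℝ) ^ 2 - β3 * (r : ℝ) ^ 3) * (r : ℝ) ^ 3))
      = ∑ r ∈ Finset.Icc (-n + 1) n,
        ((r : ℝ) ^ 3 * f r + ((-β0) * ((r : ℝ)) ^ 3 + ((-β1) * ((r : ℝ)) ^ 4
          + ((-β2) * ((r : ℝ)) ^ 5 + (-β3) * ((r : ℝ)) ^ 6))))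
      := Finset.sum_congr rfl fun r _ => by ring
    rw [hsplit]
    simp only [Finset.sum_add_distrib, ← Finset.mul_sum]
    rw [p3, p4, p5, p6, hβ0, hb1, hb2, hb3]
    generalize hA : 4 * (n : ℝ) ^ 2 - 9 = A at hN9 ⊢
    generalize hC : 4 * (n : ℝ) ^ 2 - 1 = C at hN4 ⊢
    generalize hB : (n : ℝ) ^ 2 - 1 = B at hN1 ⊢
    field_simp
    subst hA hB hC
    ring
  -- conclusion
  intro b0 b1 b2 b3 hne
  have hq : 0 < ∑ r ∈ Finset.Icc (-n + 1) n,
      ((β0 - b0) + (β1 - b1) * (r : ℝ) + (β2 - b2) * (r : ℝ) ^ 2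
        + (β3 - b3) * (r : ℝ) ^ 3) ^ 2 := by
    have hnn : (0 : ℝ) ≤ ∑ r ∈ Finset.Icc (-n + 1) n,
        ((β0 - b0) + (β1 - b1) * (r : ℝ) + (β2 - b2) * (r : ℝ) ^ 2
          + (β3 - b3) * (r : ℝ) ^ 3) ^ 2 := Finset.sum_nonneg fun r _ => sq_nonneg _
    rcases hnn.lt_or_eq with h | h
    · exact h
    · exfalso
      have hz := (Finset.sum_eq_zero_iff_of_nonneg fun r _ => sq_nonneg _).mp h.symm
      have m1 : (-1 : ℤ) ∈ Finset.Icc (-n + 1) n := by simp only [Finset.mem_Icc]; omega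
      have m2 : (0 : ℤ) ∈ Finset.Icc (-n + 1) n := by simp only [Finset.mem_Icc]; omega
      have m3 : (1 : ℤ) ∈ Finset.Icc (-n + 1) n := by simp only [Finset.mem_Icc]; omega
      have m4 : (2 : ℤ) ∈ Finset.Icc (-n + 1) n := by simp only [Finset.mem_Icc]; omega
      have e1 := hz _ m1
      have e2 := hz _ m2
      have e3 := hz _ m3
      have e4 := hz _ m4
      rw [sq_eq_zero_iff] at e1 e2 e3 e4
      push_cast at e1 e2 e3 e4
      apply hne
      simp only [Prod.mk.injEq]
      refine ⟨by linarith, by linarith, by linarith, by linarith⟩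
  have hexp : (∑ r ∈ Finset.Icc (-n + 1) n,
      (f r - b0 - b1 * (r : ℝ) - b2 * (r : ℝ) ^ 2 - b3 * (r : ℝ) ^ 3) ^ 2)
    = ∑ r ∈ Finset.Icc (-n + 1) n,
      ((f r - β0 - β1 * (r : ℝ) - β2 * (r : ℝ) ^ 2 - β3 * (r : ℝ) ^ 3) ^ 2
        + ((2 * (β0 - b0)) *
            ((f r - β0 - β1 * (r : ℝ) - β2 * (r : ℝ) ^ 2 - β3 * (r : ℝ) ^ 3) * (r : ℝ) ^ 0)
        + ((2 * (β1 - b1)) *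
            ((f r - β0 - β1 * (r : ℝ) - β2 * (r : ℝ) ^ 2 - β3 * (r : ℝ) ^ 3) * (r : ℝ) ^ 1)
        + ((2 * (β2 - b2)) *
            ((f r - β0 - β1 * (r : ℝ) - β2 * (r : ℝ) ^ 2 - β3 * (r : ℝ) ^ 3) * (r : ℝ) ^ 2)
        + ((2 * (β3 - b3)) *
            ((f r - β0 - β1 * (r : ℝ) - β2 * (r : ℝ) ^ 2 - β3 * (r : ℝ) ^ 3) * (r : ℝ) ^ 3)
        + ((β0 - b0) + (β1 - b1) * (r : ℝ) + (β2 - b2) * (r : ℝ) ^ 2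
            + (β3 - b3) * (r : ℝ) ^ 3) ^ 2)))))
    := Finset.sum_congr rfl fun r _ => by ring
  rw [hexp]
  simp only [Finset.sum_add_distrib, ← Finset.mul_sum]
  rw [E0, E1, E2, E3]
  linarith [hq]
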